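/- For any finite-dimensional Lie algebra 𝔤 over a field of characteristic zero, the span of adjoint actions 𝔤·U(𝔤) = {gω − ωg : g ∈ 𝔤, ω ∈ U(𝔤)} (linear span) equals the span of all commutators [U(𝔤), U(𝔤)] = span{ab − ba : a, b ∈ U(𝔤)}. -/

import Mathlib

set_option synthInstance.maxHeartbeats 800000
set_option maxHeartbeats 800000

open UniversalEnvelopingAlgebra in
lemma UEA_adjoin_range_ι_eq_top
    {k : Type} [Field k]
    {𝔤 : Type} [LieRing 𝔤] [LieAlgebra k 𝔤] :
    Algebra.adjoin k (Set.range (ι k (L := 𝔤))) = ⊤ := by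
  set S := Algebra.adjoin k (Set.range (ι k (L := 𝔤)))
  have hmem : ∀ x : 𝔤, ι k x ∈ S := fun x =>
    Algebra.subset_adjoin (Set.mem_range_self x)
  letI : LieRing S := LieRing.ofAssociativeRing
  letI : LieRing (UniversalEnvelopingAlgebra k 𝔤) := LieRing.ofAssociativeRing
  let f : 𝔤 →ₗ⁅k⁆ S :=
    { toFun := fun x => ⟨ι k x, hmem x⟩
      map_add' := fun x y => by ext; simp
      map_smul' := fun c x => by ext; simp
      map_lie' := fun {x y} => by
        ext
        show (ι k ⁅x, y⁆ : UniversalEnvelopingAlgebra k 𝔤) = _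
        simp [LieRing.of_associative_ring_bracket, LieHom.map_lie] }
  have key : S.val.comp (lift k f) = AlgHom.id k (UniversalEnvelopingAlgebra k 𝔤) := by
    apply hom_ext
    refine LieHom.ext fun x => ?_
    simp [f, lift_ι_apply]
  rw [eq_top_iff]
  intro a _
  have : S.val ((lift k f) a) = a := by
    have := congrArg (fun g => g a) (congrArg DFunLike.coe key)
    simpa using this
  rw [← this]
  exact ((lift k f) a).2

/-- For any finite-dimensional Lie algebra `𝔤` over a field of characteristic
zero, the linear span `𝔤·U(𝔤)` of the elements `gω − ωg` (`g ∈ 𝔤 ⊂ U(𝔤)`, `ω ∈ U(𝔤)`)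
equals the linear span `[U(𝔤), U(𝔤)]` of all commutators `ab − ba` (`a, b ∈ U(𝔤)`). -/
theorem g_action_span_eq_commutator_span
    {k : Type} [Field k] [CharZero k]
    {𝔤 : Type} [LieRing 𝔤] [LieAlgebra k 𝔤] [FiniteDimensional k 𝔤] :
    Submodule.span k {c : UniversalEnvelopingAlgebra k 𝔤 |
        ∃ (x : 𝔤) (ω : UniversalEnvelopingAlgebra k 𝔤),
          UniversalEnvelopingAlgebra.ι k x * ω - ω * UniversalEnvelopingAlgebra.ι k x = c}
      = Submodule.span k {c : UniversalEnvelopingAlgebra k 𝔤 |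
          ∃ a e : UniversalEnvelopingAlgebra k 𝔤, a * e - e * a = c} := by
  apply le_antisymm
  · apply Submodule.span_le.2
    rintro c ⟨x, ω, rfl⟩
    exact Submodule.subset_span ⟨_, ω, rfl⟩
  · apply Submodule.span_le.2
    rintro c ⟨a, b, rfl⟩
    have ha : a ∈ Algebra.adjoin k (Set.range (UniversalEnvelopingAlgebra.ι k (L := 𝔤))) := by
      rw [UEA_adjoin_range_ι_eq_top]; trivial
    induction ha using Algebra.adjoin_induction generalizing b with
    | mem x hx =>
      obtain ⟨y, rfl⟩ := hx
      exact Submodule.subset_span ⟨y, b, rfl⟩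
    | algebraMap r =>
      have : algebraMap k _ r * b - b * algebraMap k _ r = 0 := by
        rw [Algebra.commutes]; noncomm_ring
      rw [this]; exact Submodule.zero_mem _
    | add x y hx hy ihx ihy =>
      have : (x + y) * b - b * (x + y) = (x * b - b * x) + (y * b - b * y) := by noncomm_ring
      rw [this]; exact Submodule.add_mem _ (ihx b) (ihy b)
    | mul x y hx hy ihx ihy =>
      have : (x * y) * b - b * (x * y)
          = (x * (y * b) - (y * b) * x) + (y * (b * x) - (b * x) * y) := by noncomm_ring
      rw [this]; exact Submodule.add_mem _ (ihx (y * b)) (ihy (b * x))
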